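/- Let X be a connected multigraph with 2 ≤ deg(x) ≤ M for all x, not a cycle, in which small cycles are dense with radius parameter R. Then there exists a constant L (depending only on M and R) such that for every oriented edge e there is a non-backtracking path of length at most L from e to ě. -/

import Mathlib

open scoped BigOperators
open Filter

/-- A multigraph given by its set of *oriented* edges. Each oriented edge `e`
has an initial vertex `tail e = e⁻`, a terminal vertex `head e = e⁺`, and a
reversal `bar e = ě` with `ě ≠ e` (loops are counted twice). Local finiteness
is built in. -/
structure Multigraph where
  V : Type
  E : Type
  tail : E → V
  head : E → V
  bar : E → E
  bar_bar : ∀ e, bar (bar e) = e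
  bar_ne : ∀ e, bar e ≠ e
  head_bar : ∀ e, head (bar e) = tail e
  locFin : ∀ x, {e | tail e = x}.Finite

namespace Multigraph
variable (G : Multigraph)

/-- The degree of a vertex: the number of oriented edges emanating from it. -/
noncomputable def deg (x : G.V) : ℕ := (G.locFin x).toFinset.card

/-- `e → f`: `f` may follow `e` in a non-backtracking walk. -/
def Step (e f : G.E) : Prop := G.tail f = G.head e ∧ f ≠ G.bar e

/-- `e ⇒ f`: there is a non-backtracking walk from `e` to `f`. -/
def Reach : G.E → G.E → Prop := Relation.ReflTransGen G.Step

/-- One-step transition probabilities of the edge non-backtracking random walk. -/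
noncomputable def q (e f : G.E) : ℝ :=
  open Classical in
  if G.Step e f then 1 / ((G.deg (G.head e) : ℝ) - 1) else 0

/-- `n`-step transition probabilities `q_E^(n)` of the edge NBRW. -/
noncomputable def qn (G : Multigraph) : ℕ → G.E → G.E → ℝ
  | 0, e, f => open Classical in if e = f then 1 else 0
  | n + 1, e, f => ∑' g : G.E, qn G n e g * G.q g f

/-- Vertex NBRW transition probabilities:
`q^(n)(x,y) = (1/deg x) ∑_{e⁺=x, f⁺=y} q_E^(n)(e,f)`. -/
noncomputable def qv (n : ℕ) (x y : G.V) : ℝ :=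
  (1 / (G.deg x : ℝ)) *
    ∑' (e : {e : G.E // G.head e = x}) (f : {f : G.E // G.head f = y}),
      G.qn n e.1 f.1

def Adj (x y : G.V) : Prop := ∃ e : G.E, G.tail e = x ∧ G.head e = y

def Connected : Prop := ∀ x y : G.V, Relation.ReflTransGen G.Adj x y

/-- There is a walk of length `n` from `x` to `y`. -/
def WalkLen (G : Multigraph) : ℕ → G.V → G.V → Prop
  | 0, x, y => x = y
  | n + 1, x, y => ∃ z, G.Adj x z ∧ WalkLen G n z y

/-- Graph distance. -/
noncomputable def dist (x y : G.V) : ℕ := sInf {n | G.WalkLen n x y}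

/-- A cycle: a nonempty list of distinct oriented edges, with distinct initial
vertices, such that consecutive edges (cyclically) form non-backtracking steps. -/
def IsCycle (l : List G.E) : Prop :=
  l ≠ [] ∧ l.Nodup ∧ (l.map G.tail).Nodup ∧ List.Chain' G.Step (l ++ l.take 1)

/-- Small cycles are dense: some radius `R` works for every ball. -/
def SmallCyclesDense : Prop :=
  ∃ R : ℕ, ∀ x : G.V, ∃ l : List G.E, G.IsCycle l ∧ ∀ e ∈ l, G.dist x (G.tail e) ≤ R

/-- `X` is a (finite) cycle graph. -/
def IsCycleGraph : Prop := (Set.univ : Set G.V).Finite ∧ ∀ x, G.deg x = 2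

def Bipartite : Prop := ∃ c : G.V → Bool, ∀ e : G.E, c (G.tail e) ≠ c (G.head e)

end Multigraph

namespace Multigraph

variable {G : Multigraph}

lemma tail_bar (e : G.E) : G.tail (G.bar e) = G.head e := by
  conv_rhs => rw [← G.bar_bar e, G.head_bar]

lemma bar_inj {a b : G.E} (h : G.bar a = G.bar b) : a = b := by
  rw [← G.bar_bar a, h, G.bar_bar]

lemma step_bar {a b : G.E} (h : G.Step a b) : G.Step (G.bar b) (G.bar a) := by
  obtain ⟨h1, h2⟩ := h
  exact ⟨by rw [tail_bar, G.head_bar, h1], fun hc => h2 (by rw [bar_inj hc, G.bar_bar])⟩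

lemma chain_revbar {W : List G.E} (h : List.Chain' G.Step W) :
    List.Chain' G.Step ((W.map G.bar).reverse) := by
  rw [List.Chain', List.isChain_reverse, List.isChain_map]
  exact h.imp fun a b hab => step_bar hab

/-- getElem-based cyclic chain condition. -/
def CC (G : Multigraph) (l : List G.E) : Prop :=
  ∀ (i : ℕ) (h : i < l.length),
    G.Step (l[i]'h) (l[(i+1) % l.length]'(Nat.mod_lt _ (by omega)))

lemma getElem_eq_of_eq {α : Type*} {l : List α} {i j : ℕ} (h : i = j) (hi : i < l.length) :
    l[i]'hi = l[j]'(h ▸ hi) := by subst h; rfl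

lemma cyclic_iff_cc {l : List G.E} (hne : l ≠ []) :
    List.Chain' G.Step (l ++ l.take 1) ↔ G.CC l := by
  have hm : 0 < l.length := List.length_pos_iff.2 hne
  have hlen : (l ++ l.take 1).length = l.length + 1 := by
    simp only [List.length_append, List.length_take]
    omega
  rw [List.Chain', List.isChain_iff_getElem]
  have key : ∀ (i : ℕ) (h1 : i < l.length) (h2 : i < (l ++ l.take 1).length),
      (l ++ l.take 1)[i]'h2 = l[i]'h1 := fun i h1 h2 => List.getElem_append_left h1
  have key2 : ∀ (i : ℕ) (h1 : i < l.length) (h2 : i + 1 < (l ++ l.take 1).length),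
      (l ++ l.take 1)[i+1]'h2 = l[(i+1) % l.length]'(Nat.mod_lt _ (by omega)) := by
    intro i h1 h2
    rcases Nat.lt_or_ge (i+1) l.length with h | h
    · rw [List.getElem_append_left h]
      exact getElem_eq_of_eq (Nat.mod_eq_of_lt h).symm h
    · have hie : i + 1 = l.length := by omega
      rw [List.getElem_append_right (le_of_eq hie.symm)]
      have h0 : (i + 1) % l.length = 0 := by rw [hie, Nat.mod_self]
      have : (l.take 1)[i+1 - l.length]'(by
        simp only [List.length_take]; omega) = l[0]'hm := by
        have hi0 : i + 1 - l.length = 0 := by omega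
        rw [getElem_eq_of_eq hi0]
        exact List.getElem_take
      rw [this]
      exact (getElem_eq_of_eq h0 (by omega)).symm
  constructor
  · intro h i hi
    have h2 : i + 1 < (l ++ l.take 1).length := by omega
    have := h i h2
    rwa [key i hi, key2 i hi] at this
  · intro h i hi
    rw [hlen] at hi
    rw [key i (by omega), key2 i (by omega)]
    exact h i (by omega)

lemma IsCycle.cc {l : List G.E} (hl : G.IsCycle l) : G.CC l :=
  (cyclic_iff_cc hl.1).1 hl.2.2.2

lemma cc_rotate {l : List G.E} (h : G.CC l) (n : ℕ) : G.CC (l.rotate n) := by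
  intro i hi
  have hm : 0 < l.length := by
    rw [List.length_rotate] at hi; omega
  have hlr := List.length_rotate l n
  rw [List.getElem_rotate, List.getElem_rotate]
  have e1 : ((i + 1) % (l.rotate n).length + n) % l.length = ((i + n) % l.length + 1) % l.length := by
    rw [hlr, Nat.mod_add_mod, Nat.mod_add_mod]
    congr 1
    omega
  have := h ((i + n) % l.length) (Nat.mod_lt _ hm)
  convert this using 2

end Multigraph

namespace Multigraph

variable {G : Multigraph}

lemma IsCycle.length_pos {l : List G.E} (hl : G.IsCycle l) : 0 < l.length :=
  List.length_pos_iff.2 hl.1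

lemma ride (hl : G.IsCycle l) {a b : G.E} (ha : a ∈ l) (hb : b ∈ l) :
    ∃ W : List G.E, List.Chain' G.Step W ∧ W.head? = some a ∧ W.getLast? = some b ∧
      (∀ w ∈ W, w ∈ l) ∧ W.length ≤ l.length ∧ 0 < W.length := by
  classical
  set n := l.idxOf a with hn
  set l' := l.rotate n with hl'
  have hcc' : G.CC l' := cc_rotate hl.cc n
  have hmm : 0 < l.length := hl.length_pos
  have hlen' : l'.length = l.length := List.length_rotate l n
  have hnlt : n < l.length := List.idxOf_lt_length_iff.2 ha
  have h0 : ∀ (h : 0 < l'.length), l'[0]'h = a := by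
    intro h
    have e1 : l'[0]'h = l[(0 + n) % l.length]'(Nat.mod_lt _ hmm) := List.getElem_rotate l n 0 h
    have e2 : (0 + n) % l.length = n := by
      rw [Nat.zero_add, Nat.mod_eq_of_lt hnlt]
    rw [e1, getElem_eq_of_eq e2]
    exact List.getElem_idxOf hnlt
  have hbl' : b ∈ l' := List.mem_rotate.2 hb
  set j := l'.idxOf b with hj
  have hjlt : j < l'.length := List.idxOf_lt_length_iff.2 hbl'
  refine ⟨l'.take (j+1), ?_, ?_, ?_, ?_, ?_, ?_⟩
  · rw [List.Chain', List.isChain_iff_getElem]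
    intro i hi
    have hWlen : (l'.take (j+1)).length = j + 1 := by
      rw [List.length_take]; omega
    rw [hWlen] at hi
    simp only [List.getElem_take]
    have hilt : i < l'.length := by omega
    have := hcc' i hilt
    have hmod : (i+1) % l'.length = i + 1 := Nat.mod_eq_of_lt (by omega)
    rwa [getElem_eq_of_eq hmod] at this
  · rw [List.head?_eq_getElem?]
    have hWlen : (l'.take (j+1)).length = j + 1 := by rw [List.length_take]; omega
    rw [List.getElem?_eq_getElem (by omega)]
    simp only [List.getElem_take]
    rw [h0 (by omega)]
  · rw [List.getLast?_eq_getElem?]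
    have hWlen : (l'.take (j+1)).length = j + 1 := by rw [List.length_take]; omega
    rw [hWlen]
    rw [List.getElem?_eq_getElem (by omega)]
    simp only [Nat.add_sub_cancel, List.getElem_take]
    rw [List.getElem_idxOf hjlt]
  · intro w hw
    exact List.mem_rotate.1 (List.take_subset _ _ hw)
  · rw [List.length_take]; omega
  · rw [List.length_take]; omega

lemma exists_succ (hl : G.IsCycle l) {c : G.E} (hc : c ∈ l) : ∃ s ∈ l, G.Step c s := by
  classical
  have hi : l.idxOf c < l.length := List.idxOf_lt_length_iff.2 hc
  have := hl.cc (l.idxOf c) hi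
  rw [List.getElem_idxOf hi] at this
  exact ⟨_, List.getElem_mem _, this⟩

lemma exists_pred (hl : G.IsCycle l) {c : G.E} (hc : c ∈ l) : ∃ p ∈ l, G.Step p c := by
  classical
  have hm : 0 < l.length := hl.length_pos
  have hi : l.idxOf c < l.length := List.idxOf_lt_length_iff.2 hc
  set i := l.idxOf c with hidef
  set j := (i + l.length - 1) % l.length with hjdef
  have hjlt : j < l.length := Nat.mod_lt _ hm
  have := hl.cc j hjlt
  have hmod : (j + 1) % l.length = i := by
    rw [hjdef, Nat.mod_add_mod]
    have : i + l.length - 1 + 1 = i + l.length := by omega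
    rw [this, Nat.add_mod_right, Nat.mod_eq_of_lt hi]
  rw [getElem_eq_of_eq hmod, List.getElem_idxOf hi] at this
  exact ⟨_, List.getElem_mem hjlt, this⟩

lemma heads_eq (hl : G.IsCycle l) : l.map G.head = (l.map G.tail).rotate 1 := by
  apply List.ext_getElem
  · simp
  · intro i h1 h2
    have hlen : i < l.length := by simpa using h1
    rw [List.getElem_map, List.getElem_rotate]
    have h3 : (i + 1) % (l.map G.tail).length < (l.map G.tail).length := by
      apply Nat.mod_lt; simpa using hl.length_pos
    rw [List.getElem_map]
    have hmt : (l.map G.tail).length = l.length := by simp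
    have := (hl.cc i hlen).1
    rw [← this]
    exact congrArg G.tail (getElem_eq_of_eq (by rw [hmt]) _)

lemma heads_nodup (hl : G.IsCycle l) : (l.map G.head).Nodup := by
  rw [heads_eq hl]
  exact List.nodup_rotate.2 hl.2.2.1

lemma tail_eq_unique (hl : G.IsCycle l) {c₁ c₂ : G.E} (h₁ : c₁ ∈ l) (h₂ : c₂ ∈ l)
    (h : G.tail c₁ = G.tail c₂) : c₁ = c₂ :=
  List.inj_on_of_nodup_map hl.2.2.1 h₁ h₂ h

lemma head_eq_unique (hl : G.IsCycle l) {c₁ c₂ : G.E} (h₁ : c₁ ∈ l) (h₂ : c₂ ∈ l)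
    (h : G.head c₁ = G.head c₂) : c₁ = c₂ :=
  List.inj_on_of_nodup_map (heads_nodup hl) h₁ h₂ h

def revC (G : Multigraph) (l : List G.E) : List G.E := (l.map G.bar).reverse

lemma mem_revC {l : List G.E} {a : G.E} (ha : a ∈ l) : G.bar a ∈ G.revC l := by
  rw [revC, List.mem_reverse]
  exact List.mem_map_of_mem ha

lemma length_revC (l : List G.E) : (G.revC l).length = l.length := by simp [revC]

lemma revC_isCycle (hl : G.IsCycle l) : G.IsCycle (G.revC l) := by
  have hm : 0 < l.length := hl.length_pos
  have hne : G.revC l ≠ [] := by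
    simp only [revC, ne_eq, List.reverse_eq_nil_iff, List.map_eq_nil_iff]
    exact hl.1
  refine ⟨hne, ?_, ?_, ?_⟩
  · rw [revC, List.nodup_reverse]
    exact hl.2.1.map (fun a b => bar_inj)
  · have : (G.revC l).map G.tail = (l.map G.head).reverse := by
      rw [revC, List.map_reverse, List.map_map]
      congr 1
      exact List.map_congr_left (fun e _ => tail_bar e)
    rw [this, List.nodup_reverse]
    exact heads_nodup hl
  · rw [cyclic_iff_cc hne]
    intro i hi
    have hrl : (G.revC l).length = l.length := length_revC l
    rw [hrl] at hi
    have hget : ∀ (k : ℕ) (hk : k < (G.revC l).length), (G.revC l)[k]'hk = G.bar (l[l.length - 1 - k]'(by rw [hrl] at hk; omega)) := by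
      intro k hk
      have h1 : (G.revC l)[k]'hk = (l.map G.bar)[(l.map G.bar).length - 1 - k]'(by
          simp only [revC, List.length_reverse] at hk; simp; omega) :=
        List.getElem_reverse _
      rw [h1, List.getElem_map]
      exact congrArg G.bar (getElem_eq_of_eq (by simp) _)
    rw [hget i (by omega), hget ((i+1) % (G.revC l).length) (Nat.mod_lt _ (by omega))]
    apply step_bar
    have hj : l.length - 1 - ((i+1) % (G.revC l).length) < l.length := by omega
    have := hl.cc (l.length - 1 - ((i+1) % (G.revC l).length)) hj
    have hmod : (l.length - 1 - ((i+1) % (G.revC l).length) + 1) % l.length = l.length - 1 - i := by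
      rw [hrl]
      rcases Nat.lt_or_ge i (l.length - 1) with h | h
      · have h1 : (i+1) % l.length = i + 1 := Nat.mod_eq_of_lt (by omega)
        rw [h1]
        have h2 : l.length - 1 - (i+1) + 1 = l.length - 1 - i := by omega
        rw [h2, Nat.mod_eq_of_lt (by omega)]
      · have hie : i = l.length - 1 := by omega
        have h1 : (i+1) % l.length = 0 := by
          rw [hie]
          have : l.length - 1 + 1 = l.length := by omega
          rw [this, Nat.mod_self]
        rw [h1]
        have h2 : l.length - 1 - 0 + 1 = l.length := by omega
        rw [h2, Nat.mod_self]
        omega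
    rwa [getElem_eq_of_eq hmod] at this

open Classical in
noncomputable def predF (hl : G.IsCycle l) : G.E → G.E := fun c =>
  if h : c ∈ l then (exists_pred hl h).choose else c

lemma predF_mem (hl : G.IsCycle l) {c : G.E} (hc : c ∈ l) : predF hl c ∈ l := by
  unfold predF
  rw [dif_pos hc]
  exact (exists_pred hl hc).choose_spec.1

lemma predF_step (hl : G.IsCycle l) {c : G.E} (hc : c ∈ l) : G.Step (predF hl c) c := by
  unfold predF
  rw [dif_pos hc]
  exact (exists_pred hl hc).choose_spec.2

lemma predF_eq (hl : G.IsCycle l) {c p : G.E} (hc : c ∈ l) (hp : p ∈ l)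
    (h : G.head p = G.tail c) : p = predF hl c :=
  head_eq_unique hl hp (predF_mem hl hc) (h.trans (predF_step hl hc).1)

lemma chain_pred (hl : G.IsCycle l) :
    ∀ (W : List G.E), List.Chain' G.Step W → (∀ w ∈ W, w ∈ l) →
      ∀ a b, W.head? = some a → W.getLast? = some b → (predF hl)^[W.length - 1] b = a := by
  intro W
  induction W with
  | nil => intro _ _ a b h; simp at h
  | cons x t ih =>
    intro hch hmem a b hh hlast
    simp only [List.head?_cons, Option.some.injEq] at hh
    subst hh
    cases t with
    | nil =>
      simp only [List.getLast?_singleton, Option.some.injEq] at hlast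
      subst hlast; rfl
    | cons y t' =>
      have hch' : List.Chain' G.Step (y :: t') := hch.tail
      have hstep : G.Step x y := List.isChain_cons_cons.1 hch |>.1
      have hmem' : ∀ w ∈ y :: t', w ∈ l := fun w hw => hmem w (List.mem_cons_of_mem _ hw)
      have hlast' : (y :: t').getLast? = some b := by
        rw [← hlast]; rw [List.getLast?_cons_cons]
      have hiter := ih hch' hmem' y b rfl hlast'
      have hxy : x = predF hl y := by
        apply predF_eq hl (hmem' y (List.mem_cons_self)) (hmem x (List.mem_cons_self))
        exact hstep.1.symm
      have hlen : (x :: y :: t').length - 1 = ((y :: t').length - 1) + 1 := by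
        simp
      rw [hlen, Function.iterate_succ_apply', hiter, ← hxy]

lemma covering (hl : G.IsCycle l) {x c : G.E} (hx : x ∈ l) (hc : c ∈ l) :
    ∃ s, (predF hl)^[s] x = c := by
  obtain ⟨W, hch, hh, hlast, hmem, _, _⟩ := ride hl hc hx
  exact ⟨W.length - 1, chain_pred hl W hch hmem c x hh hlast⟩

end Multigraph

namespace Multigraph

variable {G : Multigraph}

lemma third_edge (hconn : G.Connected) (hnc : ¬ G.IsCycleGraph) {l : List G.E}
    (hl : G.IsCycle l) :
    ∃ c ∈ l, ∃ p ∈ l, ∃ h : G.E, G.Step p c ∧ G.tail h = G.tail c ∧ h ≠ c ∧ h ≠ G.bar p := by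
  classical
  by_contra hcon
  push_neg at hcon
  set S : Set G.V := {v | ∃ c ∈ l, G.tail c = v} with hS
  have hclosed : ∀ v ∈ S, ∀ g : G.E, G.tail g = v → G.head g ∈ S := by
    intro v hv g hgv
    obtain ⟨c, hcl, hcv⟩ := hv
    obtain ⟨p, hpl, hpc⟩ := exists_pred hl hcl
    by_cases hgc : g = c
    · subst hgc
      obtain ⟨s, hsl, hss⟩ := exists_succ hl hcl
      exact ⟨s, hsl, hss.1⟩
    · have hgb := hcon c hcl p hpl g hpc (by rw [hgv, hcv]) hgc
      subst hgb
      exact ⟨p, hpl, by rw [G.head_bar]⟩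
  obtain ⟨c₀, hc₀⟩ : ∃ c₀, c₀ ∈ l := List.exists_mem_of_ne_nil l hl.1
  have huniv : ∀ y : G.V, y ∈ S := by
    intro y
    have h0 : G.tail c₀ ∈ S := ⟨c₀, hc₀, rfl⟩
    have hrt := hconn (G.tail c₀) y
    induction hrt with
    | refl => exact h0
    | tail hxz hadj ih =>
      obtain ⟨g, hg1, hg2⟩ := hadj
      exact hg2 ▸ hclosed _ ih g hg1
  have hfin : (Set.univ : Set G.V).Finite := by
    apply Set.Finite.subset (List.finite_toSet (l.map G.tail))
    intro y _
    obtain ⟨c, hcl, hcv⟩ := huniv y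
    simp only [List.coe_toFinset, Set.mem_setOf_eq, List.mem_map]
    exact ⟨c, hcl, hcv⟩
  have hdeg2 : ∀ v : G.V, G.deg v = 2 := by
    intro v
    obtain ⟨c, hcl, hcv⟩ := huniv v
    obtain ⟨p, hpl, hpc⟩ := exists_pred hl hcl
    have hset : (G.locFin v).toFinset = {c, G.bar p} := by
      ext g
      simp only [Set.Finite.mem_toFinset, Set.mem_setOf_eq, Finset.mem_insert,
        Finset.mem_singleton]
      constructor
      · intro hg
        by_cases hgc : g = c
        · exact Or.inl hgc
        · exact Or.inr (hcon c hcl p hpl g hpc (hg.trans hcv.symm) hgc)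
      · rintro (rfl | rfl)
        · exact hcv
        · rw [tail_bar, ← hpc.1]; exact hcv
    have : G.deg v = ({c, G.bar p} : Finset G.E).card := by
      rw [deg, hset]
    rw [this, Finset.card_pair hpc.2]
  exact hnc ⟨hfin, hdeg2⟩

lemma walklen_snoc {x z y : G.V} {n : ℕ} (h : G.WalkLen n x z) (hzy : G.Adj z y) :
    G.WalkLen (n+1) x y := by
  induction n generalizing x with
  | zero => exact ⟨y, h ▸ hzy, rfl⟩
  | succ n ih =>
    obtain ⟨w, hxw, hw⟩ := h
    exact ⟨w, hxw, ih hw⟩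

lemma exists_walklen (hconn : G.Connected) (x y : G.V) : ∃ n, G.WalkLen n x y := by
  have hrt := hconn x y
  induction hrt with
  | refl => exact ⟨0, rfl⟩
  | tail hab hbc ih =>
    obtain ⟨n, hn⟩ := ih
    exact ⟨n+1, walklen_snoc hn hbc⟩

lemma walklen_dist (hconn : G.Connected) (x y : G.V) : G.WalkLen (G.dist x y) x y :=
  Nat.sInf_mem (exists_walklen hconn x y)

lemma ball_finset {M : ℕ} (hdeg : ∀ x : G.V, G.deg x ≤ M) (n : ℕ) :
    ∃ F : G.V → Finset G.V, ∀ x, (∀ y, G.WalkLen n x y → y ∈ F x) ∧ (F x).card ≤ (M+1)^n := by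
  classical
  induction n with
  | zero =>
    refine ⟨fun x => {x}, fun x => ⟨fun y hy => ?_, by simp⟩⟩
    have : x = y := hy
    simp [this]
  | succ n ih =>
    obtain ⟨F, hF⟩ := ih
    refine ⟨fun x => (G.locFin x).toFinset.biUnion (fun e => F (G.head e)), fun x => ⟨?_, ?_⟩⟩
    · intro y hy
      obtain ⟨z, ⟨g, hg1, hg2⟩, hw⟩ := hy
      apply Finset.mem_biUnion.2
      exact ⟨g, (Set.Finite.mem_toFinset _).2 hg1, (hF (G.head g)).1 y (by rw [hg2]; exact hw)⟩
    · calc ((G.locFin x).toFinset.biUnion (fun e => F (G.head e))).card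
          ≤ ∑ e ∈ (G.locFin x).toFinset, (F (G.head e)).card := Finset.card_biUnion_le
        _ ≤ (G.locFin x).toFinset.card • (M+1)^n :=
            Finset.sum_le_card_nsmul _ _ _ (fun e _ => (hF (G.head e)).2)
        _ = G.deg x * (M+1)^n := by rw [smul_eq_mul]; rfl
        _ ≤ (M+1) * (M+1)^n := by
            have := hdeg x
            exact Nat.mul_le_mul (by omega) (le_refl _)
        _ = (M+1)^(n+1) := by ring
lemma cycle_small {M R : ℕ} (hconn : G.Connected) (hdegM : ∀ x : G.V, G.deg x ≤ M)
    {x : G.V} {l : List G.E} (hl : G.IsCycle l) (hR : ∀ e ∈ l, G.dist x (G.tail e) ≤ R) :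
    l.length ≤ (R+1) * (M+1)^R := by
  classical
  have hballs : ∀ k : ℕ, ∃ F : G.V → Finset G.V,
      ∀ x, (∀ y, G.WalkLen k x y → y ∈ F x) ∧ (F x).card ≤ (M+1)^k := fun k => ball_finset hdegM k
  choose F hF using hballs
  set Ball : Finset G.V := (Finset.range (R+1)).biUnion (fun k => F k x) with hBall
  have hsub : ∀ v ∈ (l.map G.tail).toFinset, v ∈ Ball := by
    intro v hv
    have hvl : v ∈ l.map G.tail := List.mem_toFinset.1 hv
    obtain ⟨e, hel, hev⟩ := List.mem_map.1 hvl
    have hd : G.dist x v ≤ R := hev ▸ hR e hel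
    have hw : G.WalkLen (G.dist x v) x v := walklen_dist hconn x v
    apply Finset.mem_biUnion.2
    exact ⟨G.dist x v, Finset.mem_range.2 (by omega), (hF (G.dist x v) x).1 v hw⟩
  have hcard : l.length = (l.map G.tail).toFinset.card := by
    rw [List.toFinset_card_of_nodup hl.2.2.1, List.length_map]
  rw [hcard]
  calc (l.map G.tail).toFinset.card ≤ Ball.card := Finset.card_le_card hsub
    _ ≤ ∑ k ∈ Finset.range (R+1), (F k x).card := Finset.card_biUnion_le
    _ ≤ ∑ _k ∈ Finset.range (R+1), (M+1)^R := by
        apply Finset.sum_le_sum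
        intro k hk
        exact ((hF k x).2).trans (Nat.pow_le_pow_right (by omega)
          (by have := Finset.mem_range.1 hk; omega))
    _ = (R+1) * (M+1)^R := by
        rw [Finset.sum_const, Finset.card_range, smul_eq_mul]

end Multigraph

namespace Multigraph

variable {G : Multigraph}

/-- Vertices lying on a cycle of length at most `b`. -/
def cvb (G : Multigraph) (b : ℕ) : Set G.V :=
  {v | ∃ l, G.IsCycle l ∧ l.length ≤ b ∧ v ∈ l.map G.tail}

def Consec (G : Multigraph) (a c : G.E) : Prop := G.tail c = G.head a

/-- `p` is an edge walk starting at `u`. -/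
def EWfrom (G : Multigraph) (u : G.V) (p : List G.E) : Prop :=
  List.Chain' G.Consec p ∧ ∀ a ∈ p.head?, G.tail a = u

/-- Final vertex of an edge walk starting at `u`. -/
def dstV (G : Multigraph) (u : G.V) (p : List G.E) : G.V := (p.getLast?.map G.head).getD u

lemma step_consec {a c : G.E} (h : G.Step a c) : G.Consec a c := h.1

lemma dstV_nil (u : G.V) : G.dstV u [] = u := rfl

lemma dstV_concat (u : G.V) (p : List G.E) (a : G.E) : G.dstV u (p ++ [a]) = G.head a := by
  rw [dstV, List.getLast?_concat]; rfl

lemma dstV_cons_ne {u : G.V} {g : G.E} {p : List G.E} (h : p ≠ []) :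
    G.dstV u (g :: p) = G.dstV u p := by
  cases p with
  | nil => exact absurd rfl h
  | cons q t => rw [dstV, dstV, List.getLast?_cons_cons]

lemma dstV_of_ne_nil {u w : G.V} {p : List G.E} (h : p ≠ []) : G.dstV u p = G.dstV w p := by
  cases p with
  | nil => exact absurd rfl h
  | cons x t =>
    rw [dstV, dstV, List.getLast?_eq_getLast (by simp)]
    simp

lemma dstV_single (u : G.V) (g : G.E) : G.dstV u [g] = G.head g := rfl

noncomputable def dl (G : Multigraph) (b : ℕ) (u : G.V) : ℕ :=
  sInf {n | ∃ p, G.EWfrom u p ∧ List.Chain' G.Step p ∧ p.length = n ∧ G.dstV u p ∈ G.cvb b}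

lemma ew_of_walklen : ∀ {n : ℕ} {u v : G.V}, G.WalkLen n u v →
    ∃ p : List G.E, G.EWfrom u p ∧ p.length = n ∧ G.dstV u p = v := by
  intro n
  induction n with
  | zero =>
    intro u v h
    exact ⟨[], ⟨List.isChain_nil, by simp⟩, rfl, h⟩
  | succ n ih =>
    intro u v h
    obtain ⟨z, ⟨g, hg1, hg2⟩, hw⟩ := h
    obtain ⟨p, ⟨hch, hhd⟩, hlen, hdst⟩ := ih hw
    refine ⟨g :: p, ⟨?_, ?_⟩, by simp [hlen], ?_⟩
    · rw [List.Chain', List.isChain_cons]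
      refine ⟨fun y hy => ?_, hch⟩
      have := hhd y hy
      rw [Consec, this, hg2]
    · intro a ha
      simp only [List.head?_cons, Option.mem_def, Option.some.injEq] at ha
      rw [← ha, hg1]
    · cases p with
      | nil =>
        rw [dstV_single]
        rw [dstV_nil] at hdst
        rw [hg2, hdst]
      | cons x t =>
        rw [dstV_cons_ne (by simp), dstV_of_ne_nil (w := z) (by simp)]
        exact hdst

lemma chain_decomp {α : Type*} {S T : α → α → Prop} :
    ∀ (l : List α), List.Chain' T l → ¬ List.Chain' S l →
      ∃ l₁ a b l₂, l = l₁ ++ a :: b :: l₂ ∧ T a b ∧ ¬ S a b := by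
  intro l
  induction l with
  | nil => intro _ h; exact absurd List.isChain_nil h
  | cons x t ih =>
    intro hT hS
    cases t with
    | nil => exact absurd (List.isChain_singleton x) hS
    | cons y t' =>
      by_cases hxy : S x y
      · obtain ⟨l₁, a, b, l₂, heq, hTab, hSab⟩ :=
          ih hT.tail (fun h => hS (List.isChain_cons_cons.2 ⟨hxy, h⟩))
        exact ⟨x :: l₁, a, b, l₂, by rw [List.cons_append, heq], hTab, hSab⟩
      · exact ⟨[], x, y, t', rfl, (List.isChain_cons_cons.1 hT).1, hxy⟩

lemma remove_backtrack {u : G.V} {p₁ p₂ : List G.E} {a : G.E}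
    (hew : G.EWfrom u (p₁ ++ a :: G.bar a :: p₂)) :
    G.EWfrom u (p₁ ++ p₂) ∧ G.dstV u (p₁ ++ p₂) = G.dstV u (p₁ ++ a :: G.bar a :: p₂) := by
  obtain ⟨hch, hhd⟩ := hew
  rw [List.Chain', List.isChain_append] at hch
  obtain ⟨hch1, hch2, hglue⟩ := hch
  have hgl_a : ∀ x ∈ p₁.getLast?, G.tail a = G.head x := by
    intro x hx
    exact hglue x hx a (by simp)
  have hglue2 : ∀ y ∈ p₂.head?, G.tail y = G.tail a := by
    intro y hy
    have h1 := (List.isChain_cons.1 hch2.tail).1 y hy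
    rw [Consec, G.head_bar] at h1
    exact h1
  have hhd_a : p₁ = [] → G.tail a = u := by
    intro h1
    subst h1
    exact hhd a (by simp)
  constructor
  · constructor
    · rw [List.Chain', List.isChain_append]
      refine ⟨hch1, hch2.tail.tail, fun x hx y hy => ?_⟩
      rw [Consec, hglue2 y hy]
      exact hgl_a x hx
    · intro g hg
      cases p₁ with
      | nil =>
        simp only [List.nil_append] at hg ⊢
        rw [hglue2 g hg]
        exact hhd_a rfl
      | cons x t =>
        simp only [List.cons_append, List.head?_cons, Option.mem_def,
          Option.some.injEq] at hg ⊢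
        rw [← hg]
        exact hhd x (by simp)
  · cases p₂ with
    | nil =>
      have hr : G.dstV u (p₁ ++ a :: G.bar a :: []) = G.tail a := by
        have he : p₁ ++ [a, G.bar a] = (p₁ ++ [a]) ++ [G.bar a] := by simp
        rw [he, dstV_concat, G.head_bar]
      rw [hr, List.append_nil]
      cases p₁ with
      | nil => rw [dstV_nil]; exact (hhd_a rfl).symm
      | cons x t =>
        have hne : x :: t ≠ [] := by simp
        have hlast : (x :: t).getLast? = some ((x :: t).getLast hne) :=
          List.getLast?_eq_getLast hne
        rw [dstV, hlast]
        simp only [Option.map_some, Option.getD_some]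
        exact (hgl_a _ (by rw [hlast]; rfl)).symm
    | cons q t₂ =>
      rw [dstV, dstV, List.getLast?_append, List.getLast?_append,
        List.getLast?_cons_cons, List.getLast?_cons_cons]

lemma shorten {b : ℕ} {u : G.V} : ∀ (N : ℕ) (p : List G.E), p.length ≤ N →
    G.EWfrom u p → G.dstV u p ∈ G.cvb b →
    ∃ p', G.EWfrom u p' ∧ List.Chain' G.Step p' ∧ p'.length ≤ p.length ∧
      G.dstV u p' ∈ G.cvb b := by
  intro N
  induction N with
  | zero =>
    intro p hlen hew hdst
    have : p = [] := List.length_eq_zero_iff.1 (by omega)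
    subst this
    exact ⟨[], hew, List.isChain_nil, le_refl _, hdst⟩
  | succ N ih =>
    intro p hlen hew hdst
    by_cases hst : List.Chain' G.Step p
    · exact ⟨p, hew, hst, le_refl _, hdst⟩
    · obtain ⟨p₁, x, y, p₂, heq, hT, hS⟩ := chain_decomp p hew.1 hst
      have hy : y = G.bar x := by
        by_contra hne
        exact hS ⟨hT, hne⟩
      subst hy
      subst heq
      obtain ⟨hew', hdst'⟩ := remove_backtrack hew
      have hlen' : (p₁ ++ p₂).length ≤ N := by
        simp only [List.length_append, List.length_cons] at hlen ⊢
        omega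
      obtain ⟨p', h1, h2, h3, h4⟩ := ih (p₁ ++ p₂) hlen' hew' (by rw [hdst']; exact hdst)
      refine ⟨p', h1, h2, ?_, h4⟩
      simp only [List.length_append, List.length_cons] at h3 ⊢
      omega

/-- The witness set for `dl`. -/
def dlSet (G : Multigraph) (b : ℕ) (u : G.V) : Set ℕ :=
  {n | ∃ p, G.EWfrom u p ∧ List.Chain' G.Step p ∧ p.length = n ∧ G.dstV u p ∈ G.cvb b}

lemma dl_eq (b : ℕ) (u : G.V) : G.dl b u = sInf (G.dlSet b u) := rfl

lemma dl_le {b n : ℕ} {u : G.V} (h : n ∈ G.dlSet b u) : G.dl b u ≤ n := Nat.sInf_le h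

lemma dl_zero_of_mem {b : ℕ} {u : G.V} (h : u ∈ G.cvb b) : G.dl b u = 0 := by
  have h0 : 0 ∈ G.dlSet b u := ⟨[], ⟨List.isChain_nil, by simp⟩, List.isChain_nil, rfl, h⟩
  rw [dl_eq]
  exact Nat.le_zero.1 (Nat.sInf_le h0)

lemma mem_of_dl_zero {b : ℕ} {u : G.V} (hne : (G.dlSet b u).Nonempty)
    (h : G.dl b u = 0) : u ∈ G.cvb b := by
  have := Nat.sInf_mem hne
  rw [← dl_eq, h] at this
  obtain ⟨p, hew, _, hlen, hdst⟩ := this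
  have : p = [] := List.length_eq_zero_iff.1 hlen
  subst this
  rwa [dstV_nil] at hdst

lemma dl_pos_not_mem {b : ℕ} {u : G.V} (h : 0 < G.dl b u) : u ∉ G.cvb b := by
  intro hu
  rw [dl_zero_of_mem hu] at h
  omega

end Multigraph

namespace Multigraph

variable {G : Multigraph}

/-- `g` admits a U-turn through a cycle of length at most `b` at its head. -/
def UT (G : Multigraph) (b : ℕ) (g : G.E) : Prop :=
  ∃ l, G.IsCycle l ∧ l.length ≤ b ∧ ∃ c ∈ l, G.tail c = G.head g ∧
    (∀ p ∈ l, G.head p = G.tail c → g ≠ p) ∧ g ≠ G.bar c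

lemma uturn {b : ℕ} {g : G.E} (h : G.UT b g) :
    ∃ W : List G.E, List.Chain' G.Step W ∧ W.head? = some g ∧
      W.getLast? = some (G.bar g) ∧ W.length ≤ b + 2 := by
  obtain ⟨l, hl, hlen, c, hcl, hct, hpred, hbar⟩ := h
  obtain ⟨p, hpl, hpc⟩ := exists_pred hl hcl
  obtain ⟨W₀, hch, hh, hlast, hmem, hWlen, hWpos⟩ := ride hl hcl hpl
  refine ⟨g :: (W₀ ++ [G.bar g]), ?_, by simp, ?_, ?_⟩
  · rw [List.Chain', List.isChain_cons]
    constructor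
    · intro y hy
      rw [List.head?_append, hh] at hy
      simp only [Option.or_some, Option.some_or, Option.mem_def, Option.some.injEq] at hy
      subst hy
      refine ⟨hct, fun hc => hbar ?_⟩
      rw [hc, G.bar_bar]
    · apply hch.append (List.isChain_singleton _)
      intro x hx y hy
      rw [hlast] at hx
      simp only [Option.mem_def, Option.some.injEq, List.head?_cons] at hx hy
      subst hx; subst hy
      refine ⟨by rw [tail_bar, ← hct, hpc.1], fun hc => ?_⟩
      have : g = p := by rw [← G.bar_bar g, hc, G.bar_bar]
      exact hpred p hpl hpc.1.symm this
  · rw [show g :: (W₀ ++ [G.bar g]) = (g :: W₀) ++ [G.bar g] by simp,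
      List.getLast?_concat]
  · simp only [List.length_cons, List.length_append, List.length_cons, List.length_nil]
    omega

lemma tail_mem_cvb {b : ℕ} {l : List G.E} {c : G.E} (hl : G.IsCycle l)
    (hlen : l.length ≤ b) (hc : c ∈ l) : G.tail c ∈ G.cvb b :=
  ⟨l, hl, hlen, List.mem_map_of_mem hc⟩

lemma ut_of_boundary {b : ℕ} {g : G.E} (hg : G.head g ∈ G.cvb b)
    (hg' : G.tail g ∉ G.cvb b) : G.UT b g := by
  obtain ⟨l, hl, hlen, hmem⟩ := hg
  obtain ⟨c, hcl, hct⟩ := List.mem_map.1 hmem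
  refine ⟨l, hl, hlen, c, hcl, hct, ?_, ?_⟩
  · intro p hpl _ hgp
    exact hg' (hgp ▸ tail_mem_cvb hl hlen hpl)
  · intro hgb
    apply hg'
    obtain ⟨s, hsl, hss⟩ := exists_succ hl hcl
    rw [hgb, tail_bar, ← hss.1]
    exact tail_mem_cvb hl hlen hsl

lemma arrive {b : ℕ} {a : G.E} (hnut : ¬ G.UT b a) (hcv : G.head a ∈ G.cvb b) :
    ∃ l, G.IsCycle l ∧ l.length ≤ b ∧ a ∈ l := by
  obtain ⟨l, hl, hlen, hmem⟩ := hcv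
  obtain ⟨c, hcl, hct⟩ := List.mem_map.1 hmem
  by_cases hp : ∃ p ∈ l, G.head p = G.tail c ∧ a = p
  · obtain ⟨p, hpl, _, hap⟩ := hp
    exact ⟨l, hl, hlen, hap ▸ hpl⟩
  · push_neg at hp
    have hbar : a = G.bar c := by
      by_contra hne
      exact hnut ⟨l, hl, hlen, c, hcl, hct, hp, hne⟩
    refine ⟨G.revC l, revC_isCycle hl, by rw [length_revC]; exact hlen, ?_⟩
    rw [hbar]
    exact mem_revC hcl

lemma dlSet_wit {M R : ℕ} (hconn : G.Connected) (hdegM : ∀ x : G.V, G.deg x ≤ M)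
    (hdense : ∀ x : G.V, ∃ l, G.IsCycle l ∧ ∀ e ∈ l, G.dist x (G.tail e) ≤ R)
    (u : G.V) : ∃ n ∈ G.dlSet ((R+1)*(M+1)^R) u, n ≤ R := by
  obtain ⟨l, hl, hRl⟩ := hdense u
  have hsmall : l.length ≤ (R+1)*(M+1)^R := cycle_small hconn hdegM hl hRl
  obtain ⟨c₀, hc₀⟩ := List.exists_mem_of_ne_nil l hl.1
  have hv : G.tail c₀ ∈ G.cvb ((R+1)*(M+1)^R) := tail_mem_cvb hl hsmall hc₀
  have hd : G.dist u (G.tail c₀) ≤ R := hRl c₀ hc₀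
  have hw := walklen_dist hconn u (G.tail c₀)
  obtain ⟨p, hew, hplen, hpdst⟩ := ew_of_walklen hw
  obtain ⟨p', hew', hch', hlen', hdst'⟩ :=
    shorten p.length p (le_refl _) hew (by rw [hpdst]; exact hv)
  exact ⟨p'.length, ⟨p', hew', hch', rfl, hdst'⟩, by omega⟩

lemma dl_le_R {M R : ℕ} (hconn : G.Connected) (hdegM : ∀ x : G.V, G.deg x ≤ M)
    (hdense : ∀ x : G.V, ∃ l, G.IsCycle l ∧ ∀ e ∈ l, G.dist x (G.tail e) ≤ R)
    (u : G.V) : G.dl ((R+1)*(M+1)^R) u ≤ R := by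
  obtain ⟨n, hn, hnR⟩ := dlSet_wit hconn hdegM hdense u
  exact le_trans (dl_le hn) hnR

lemma splice {W₁ W₂ : List G.E} {g : G.E} (h₁ : List.Chain' G.Step W₁)
    (h₂ : List.Chain' G.Step W₂) (hl : W₁.getLast? = some g) (hh : W₂.head? = some g) :
    List.Chain' G.Step (W₁ ++ W₂.tail) ∧ (W₁ ++ W₂.tail).head? = W₁.head? ∧
      (W₁ ++ W₂.tail).getLast? = W₂.getLast? ∧
      (W₁ ++ W₂.tail).length + 1 = W₁.length + W₂.length := by
  cases W₂ with
  | nil => simp at hh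
  | cons x t =>
    simp only [List.head?_cons, Option.some.injEq] at hh
    subst hh
    have hW₁ne : W₁ ≠ [] := by
      intro h; rw [h] at hl; simp at hl
    refine ⟨?_, ?_, ?_, ?_⟩
    · apply h₁.append h₂.tail
      intro x' hx' y hy
      rw [hl] at hx'
      simp only [Option.mem_def, Option.some.injEq] at hx'
      subst hx'
      exact (List.isChain_cons.1 h₂).1 y hy
    · rw [List.head?_append]
      cases W₁ with
      | nil => exact absurd rfl hW₁ne
      | cons w ws => simp
    · simp only [List.tail_cons]
      cases t with
      | nil => simp [hl]
      | cons q t₂ =>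
        rw [List.getLast?_append, List.getLast?_cons_cons]
        simp [List.getLast?_eq_getLast (l := q :: t₂) (by simp)]
    · simp only [List.length_append, List.tail_cons, List.length_cons]
      omega

lemma reverse_chain_spec {W : List G.E} {a g : G.E} (hch : List.Chain' G.Step W)
    (hh : W.head? = some a) (hl : W.getLast? = some g) :
    List.Chain' G.Step ((W.map G.bar).reverse) ∧
      ((W.map G.bar).reverse).head? = some (G.bar g) ∧
      ((W.map G.bar).reverse).getLast? = some (G.bar a) ∧
      ((W.map G.bar).reverse).length = W.length := by
  refine ⟨chain_revbar hch, ?_, ?_, by simp⟩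
  · rw [List.head?_reverse, List.getLast?_map, hl]; rfl
  · rw [List.getLast?_reverse, List.head?_map, hh]; rfl

end Multigraph

namespace Multigraph

variable {G : Multigraph}

lemma predF_iter_mem {l : List G.E} (hl : G.IsCycle l) {x : G.E} (hx : x ∈ l) :
    ∀ s, (predF hl)^[s] x ∈ l := by
  intro s
  induction s with
  | zero => exact hx
  | succ s ih =>
    rw [Function.iterate_succ_apply']
    exact predF_mem hl ih

lemma dl_wit {b : ℕ} {w : G.V} (hne : (G.dlSet b w).Nonempty) :
    ∃ p, G.EWfrom w p ∧ List.Chain' G.Step p ∧ p.length = G.dl b w ∧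
      G.dstV w p ∈ G.cvb b := by
  have h := Nat.sInf_mem hne
  obtain ⟨p, h1, h2, h3, h4⟩ := h
  exact ⟨p, h1, h2, by rw [dl_eq]; exact h3, h4⟩

lemma min_wit_ut {b : ℕ} {w : G.V} {p : List G.E} (hew : G.EWfrom w p)
    (hch : List.Chain' G.Step p) (hlenp : p.length = G.dl b w)
    (hdst : G.dstV w p ∈ G.cvb b) (hpos : 0 < p.length) :
    ∃ g, p.getLast? = some g ∧ G.UT b g := by
  have hpne : p ≠ [] := by intro h; subst h; simp at hpos
  obtain ⟨t, g, rfl⟩ : ∃ t g, p = t ++ [g] :=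
    ⟨p.dropLast, p.getLast hpne, (List.dropLast_append_getLast hpne).symm⟩
  refine ⟨g, List.getLast?_concat, ?_⟩
  apply ut_of_boundary
  · rwa [dstV_concat] at hdst
  · intro htg
    have hewt : G.EWfrom w t := by
      constructor
      · exact (List.isChain_append.1 hew.1).1
      · intro y hy
        apply hew.2
        cases t with
        | nil => simp at hy
        | cons x t' =>
          simp only [List.head?_cons, Option.mem_def, Option.some.injEq] at hy
          subst hy
          simp
    have hcht : List.Chain' G.Step t := (List.isChain_append.1 hch).1
    have hdstt : G.dstV w t = G.tail g := by
      cases t with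
      | nil =>
        rw [dstV_nil]
        exact (hew.2 g (by simp)).symm
      | cons x t' =>
        have hglue := (List.isChain_append.1 hew.1).2.2
        have hlastt : (x::t').getLast? = some ((x::t').getLast (by simp)) :=
          List.getLast?_eq_getLast (by simp)
        rw [dstV, hlastt]
        simp only [Option.map_some, Option.getD_some]
        exact (hglue ((x::t').getLast (by simp)) (by rw [hlastt]; rfl) g (by simp)).symm
    have hle : G.dl b w ≤ t.length := dl_le ⟨t, hewt, hcht, rfl, by rw [hdstt]; exact htg⟩
    rw [← hlenp] at hle
    simp only [List.length_append, List.length_cons, List.length_nil] at hle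
    omega

lemma second_edge {u : G.V} (hdeg2 : 2 ≤ G.deg u) (a : G.E) :
    ∃ b, G.tail b = u ∧ b ≠ a := by
  have hcard : 1 < (G.locFin u).toFinset.card := hdeg2
  obtain ⟨b, hb, hne⟩ := Finset.exists_mem_ne hcard a
  have hb' : b ∈ {e : G.E | G.tail e = u} := (Set.Finite.mem_toFinset (G.locFin u)).1 hb
  exact ⟨b, hb', hne⟩

/-- Specification: a non-backtracking path from `a` to a U-turnable edge `g`. -/
def ReachSpec (G : Multigraph) (b : ℕ) (a : G.E) (W : List G.E) (g : G.E) : Prop :=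
  List.Chain' G.Step W ∧ W.head? = some a ∧ W.getLast? = some g ∧ G.UT b g

lemma reach_body {M R B : ℕ} (hB : B = (R+1)*(M+1)^R) (hconn : G.Connected)
    (hdeg : ∀ x : G.V, 2 ≤ G.deg x ∧ G.deg x ≤ M) (hnc : ¬ G.IsCycleGraph)
    (hdense : ∀ x : G.V, ∃ l, G.IsCycle l ∧ ∀ e ∈ l, G.dist x (G.tail e) ≤ R)
    (a : G.E) (T : ℕ)
    (IH : ∀ b' : G.E, G.dl B (G.head a) + 1 ≤ G.dl B (G.head b') →
      ∃ W g, G.ReachSpec B b' W g ∧ W.length ≤ T) :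
    ∃ W g, G.ReachSpec B a W g ∧ W.length ≤ T + (B + R + 3) := by
  classical
  have hdegM : ∀ x, G.deg x ≤ M := fun x => (hdeg x).2
  have hdlR : ∀ w : G.V, G.dl B w ≤ R := by
    rw [hB]; exact fun w => dl_le_R hconn hdegM hdense w
  have hdlne : ∀ w : G.V, (G.dlSet B w).Nonempty := by
    intro w
    obtain ⟨n, hn, _⟩ := dlSet_wit hconn hdegM hdense w
    exact ⟨n, hB ▸ hn⟩
  by_cases hd0 : G.dl B (G.head a) = 0
  · -- head of a lies on a small cycle
    have hcvbu : G.head a ∈ G.cvb B := mem_of_dl_zero (hdlne _) hd0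
    by_cases hUTa : G.UT B a
    · exact ⟨[a], a, ⟨List.isChain_singleton a, rfl, rfl, hUTa⟩, by simp; omega⟩
    · obtain ⟨l, hl, hlen, hal⟩ := arrive hUTa hcvbu
      obtain ⟨cs, hcsl, ps, hpsl, h3, hstep_ps_cs, hth, hhc, hhp⟩ :=
        third_edge hconn hnc hl
      obtain ⟨W₀, hch₀, hh₀, hlast₀, hmem₀, hlen₀, hpos₀⟩ := ride hl hal hpsl
      have hstep_ps_h3 : G.Step ps h3 :=
        ⟨hth.trans hstep_ps_cs.1, hhp⟩
      by_cases hUTh : G.UT B h3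
      · refine ⟨W₀ ++ [h3], h3, ⟨?_, ?_, List.getLast?_concat, hUTh⟩, ?_⟩
        · apply hch₀.append (List.isChain_singleton _)
          intro x hx y hy
          rw [hlast₀] at hx
          simp only [Option.mem_def, Option.some.injEq, List.head?_cons] at hx hy
          subst hx; subst hy
          exact hstep_ps_h3
        · rw [List.head?_append, hh₀]; rfl
        · simp only [List.length_append, List.length_cons, List.length_nil]
          omega
      · by_cases hdh : G.dl B (G.head h3) = 0
        · -- the head of the third edge lies on a small cycle too
          have hcvbh : G.head h3 ∈ G.cvb B := mem_of_dl_zero (hdlne _) hdh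
          obtain ⟨l₂, hl₂, hlen₂, hhl₂⟩ := arrive hUTh hcvbh
          by_cases hfp : predF hl₂ h3 = ps
          · -- surgery between the two cycles
            have hpsl₂ : ps ∈ l₂ := hfp ▸ predF_mem hl₂ hhl₂
            have hh3nl : h3 ∉ l := fun hmem => hhc (tail_eq_unique hl hmem hcsl hth)
            have hdiv : ∃ s, (predF hl)^[s+1] ps ≠ (predF hl₂)^[s+1] ps := by
              by_contra hall
              push_neg at hall
              obtain ⟨s, hs⟩ := covering hl hpsl hcsl
              have hcsl₂ : cs ∈ l₂ := by
                cases s with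
                | zero => exact hs ▸ hpsl₂
                | succ s' =>
                  rw [← hs, hall s']
                  exact predF_iter_mem hl₂ hpsl₂ _
              exact hhc (tail_eq_unique hl₂ hhl₂ hcsl₂ hth)
            set s₀ := Nat.find hdiv with hs₀def
            have hne₁₂ : (predF hl)^[s₀+1] ps ≠ (predF hl₂)^[s₀+1] ps := Nat.find_spec hdiv
            have hshared : (predF hl)^[s₀] ps = (predF hl₂)^[s₀] ps := by
              cases hs₀ : s₀ with
              | zero => rfl
              | succ s' =>
                have := Nat.find_min hdiv (m := s') (by omega)
                exact of_not_not this
            have hshl : (predF hl)^[s₀] ps ∈ l := predF_iter_mem hl hpsl _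
            have hshl₂ : (predF hl)^[s₀] ps ∈ l₂ := hshared ▸ predF_iter_mem hl₂ hpsl₂ _
            have he₁l : (predF hl)^[s₀+1] ps ∈ l := predF_iter_mem hl hpsl _
            have he₁sh : (predF hl)^[s₀+1] ps = predF hl ((predF hl)^[s₀] ps) :=
              Function.iterate_succ_apply' _ _ _
            have hstep₁ : G.Step ((predF hl)^[s₀+1] ps) ((predF hl)^[s₀] ps) :=
              he₁sh ▸ predF_step hl hshl
            have hUTe₁ : G.UT B ((predF hl)^[s₀+1] ps) := by
              refine ⟨l₂, hl₂, hlen₂, (predF hl)^[s₀] ps, hshl₂, hstep₁.1, ?_, ?_⟩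
              · intro p hpl₂ hph
                have hpe₂ : p = predF hl₂ ((predF hl)^[s₀] ps) :=
                  predF_eq hl₂ hshl₂ hpl₂ hph
                have he₂ : predF hl₂ ((predF hl)^[s₀] ps) = (predF hl₂)^[s₀+1] ps := by
                  rw [hshared]
                  exact (Function.iterate_succ_apply' _ _ _).symm
                intro hc
                apply hne₁₂
                rw [← he₂, ← hpe₂, ← hc]
              · intro hc
                have := hstep₁.2
                exact this (by rw [hc, G.bar_bar])
            obtain ⟨W₁, hch₁, hh₁, hlast₁, _, hlen₁, _⟩ := ride hl hal he₁l
            exact ⟨W₁, (predF hl)^[s₀+1] ps, ⟨hch₁, hh₁, hlast₁, hUTe₁⟩, by omega⟩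
          · -- the cycles share no arriving edge: `ps` itself is U-turnable
            have hUTps : G.UT B ps := by
              refine ⟨l₂, hl₂, hlen₂, h3, hhl₂, hstep_ps_h3.1, ?_, ?_⟩
              · intro p hpl₂ hph hc
                exact hfp (by rw [← (predF_eq hl₂ hhl₂ hpl₂ hph), ← hc])
              · intro hc
                exact hhp (by rw [hc, G.bar_bar])
            exact ⟨W₀, ps, ⟨hch₀, hh₀, hlast₀, hUTps⟩, by omega⟩
        · -- recurse through the third edge
          obtain ⟨W₁, g, ⟨hch₁, hh₁, hlast₁, hUTg⟩, hlen₁⟩ :=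
            IH h3 (by rw [hd0]; omega)
          refine ⟨W₀ ++ W₁, g, ⟨?_, ?_, ?_, hUTg⟩, ?_⟩
          · apply hch₀.append hch₁
            intro x hx y hy
            rw [hlast₀] at hx
            rw [hh₁] at hy
            simp only [Option.mem_def, Option.some.injEq] at hx hy
            subst hx; subst hy
            exact hstep_ps_h3
          · rw [List.head?_append, hh₀]; rfl
          · rw [List.getLast?_append, hlast₁]; rfl
          · rw [List.length_append]; omega
  · -- positive distance to the nearest small cycle
    have hdpos : 0 < G.dl B (G.head a) := by omega
    by_cases hblk : ∃ p, G.EWfrom (G.head a) p ∧ List.Chain' G.Step p ∧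
        p.length = G.dl B (G.head a) ∧ G.dstV (G.head a) p ∈ G.cvb B ∧
        p.head? ≠ some (G.bar a)
    · obtain ⟨p, hew, hchp, hplen, hpdst, hph⟩ := hblk
      have hpne : p ≠ [] := by
        intro h; subst h; simp at hplen; omega
      obtain ⟨g, hpg, hUTg⟩ := min_wit_ut hew hchp hplen hpdst (by
        rw [hplen]; omega)
      refine ⟨a :: p, g, ⟨?_, rfl, ?_, hUTg⟩, ?_⟩
      · rw [List.Chain', List.isChain_cons]
        refine ⟨?_, hchp⟩
        intro y hy
        refine ⟨hew.2 y hy, ?_⟩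
        intro hc
        apply hph
        cases p with
        | nil => simp at hy
        | cons x t =>
          simp only [List.head?_cons, Option.mem_def, Option.some.injEq] at hy ⊢
          rw [hy]; exact hc
      · cases p with
        | nil => exact absurd rfl hpne
        | cons x t => rw [List.getLast?_cons_cons]; exact hpg
      · simp only [List.length_cons]
        have := hdlR (G.head a)
        omega
    · push_neg at hblk
      obtain ⟨bb, hbbt, hbbne⟩ := second_edge (hdeg (G.head a)).1 (G.bar a)
      obtain ⟨p', hew', hch', hlen', hdst'⟩ := dl_wit (hdlne (G.head bb))
      have hstep_a_bb : G.Step a bb := ⟨hbbt, hbbne⟩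
      by_cases hW' : p'.head? = some (G.bar bb)
      · -- forward-blocked as well: the distance strictly increases
        obtain ⟨rest, rfl⟩ : ∃ rest, p' = G.bar bb :: rest := by
          cases p' with
          | nil => simp at hW'
          | cons x t =>
            simp only [List.head?_cons, Option.some.injEq] at hW'
            exact ⟨t, by rw [hW']⟩
        have hrest_ne : rest ≠ [] := by
          intro h
          subst h
          have : G.dstV (G.head bb) [G.bar bb] = G.head a := by
            rw [dstV_single, G.head_bar, hbbt]
          rw [this] at hdst'
          exact (dl_pos_not_mem hdpos) hdst'
        have hrest_wit : G.dl B (G.head a) ≤ rest.length := by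
          apply dl_le
          refine ⟨rest, ⟨hew'.1.tail, ?_⟩, hch'.tail, rfl, ?_⟩
          · intro y hy
            have := (List.isChain_cons.1 hew'.1).1 y hy
            rw [Consec, G.head_bar, hbbt] at this
            exact this
          · have : G.dstV (G.head bb) (G.bar bb :: rest) = G.dstV (G.head a) rest := by
              rw [dstV_cons_ne hrest_ne]
              exact dstV_of_ne_nil hrest_ne
            rw [← this]
            exact hdst'
        have hrec : G.dl B (G.head a) + 1 ≤ G.dl B (G.head bb) := by
          have : rest.length + 1 = G.dl B (G.head bb) := by
            simp only [List.length_cons] at hlen'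
            omega
          omega
        obtain ⟨W₁, g, ⟨hch₁, hh₁, hlast₁, hUTg⟩, hlen₁⟩ := IH bb hrec
        refine ⟨a :: W₁, g, ⟨?_, rfl, ?_, hUTg⟩, ?_⟩
        · rw [List.Chain', List.isChain_cons]
          refine ⟨?_, hch₁⟩
          intro y hy
          rw [hh₁] at hy
          simp only [Option.mem_def, Option.some.injEq] at hy
          subst hy
          exact hstep_a_bb
        · cases W₁ with
          | nil => simp at hh₁
          | cons x t => rw [List.getLast?_cons_cons]; exact hlast₁
        · simp only [List.length_cons]; omega
      · -- go forward one step and follow a minimal path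
        have hp'ne : p' ≠ [] := by
          intro h
          subst h
          have hd'0 : G.dl B (G.head bb) = 0 := by simp at hlen'; omega
          have hcvbb : G.head bb ∈ G.cvb B := mem_of_dl_zero (hdlne _) hd'0
          have hwit1 : G.dl B (G.head a) ≤ 1 := by
            apply dl_le
            exact ⟨[bb], ⟨List.isChain_singleton _, by
              intro y hy
              simp only [List.head?_cons, Option.mem_def, Option.some.injEq] at hy
              rw [← hy]; exact hbbt⟩, List.isChain_singleton _, rfl, by
                rw [dstV_single]; exact hcvbb⟩
          have hdl1 : G.dl B (G.head a) = 1 := by omega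
          have := hblk [bb] ⟨List.isChain_singleton _, by
              intro y hy
              simp only [List.head?_cons, Option.mem_def, Option.some.injEq] at hy
              rw [← hy]; exact hbbt⟩ (List.isChain_singleton _) (by simp [hdl1])
              (by rw [dstV_single]; exact hcvbb)
          simp only [List.head?_cons, Option.some.injEq] at this
          exact hbbne this
        obtain ⟨g, hpg, hUTg⟩ := min_wit_ut hew' hch' (by rw [hlen']) hdst' (by
          have : 0 < p'.length := List.length_pos_iff.2 hp'ne
          omega)
        refine ⟨a :: bb :: p', g, ⟨?_, rfl, ?_, hUTg⟩, ?_⟩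
        · rw [List.Chain', List.isChain_cons]
          refine ⟨?_, ?_⟩
          · intro y hy
            simp only [List.head?_cons, Option.mem_def, Option.some.injEq] at hy
            subst hy
            exact hstep_a_bb
          · rw [List.isChain_cons]
            refine ⟨?_, hch'⟩
            intro y hy
            refine ⟨(hew'.2 y hy), ?_⟩
            intro hc
            apply hW'
            cases p' with
            | nil => exact absurd rfl hp'ne
            | cons x t =>
              simp only [List.head?_cons, Option.mem_def, Option.some.injEq] at hy ⊢
              rw [hy]; exact hc
        · cases p' with
          | nil => exact absurd rfl hp'ne
          | cons x t =>
            rw [List.getLast?_cons_cons, List.getLast?_cons_cons]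
            exact hpg
        · simp only [List.length_cons]
          have h1 : p'.length = G.dl B (G.head bb) := hlen'
          have := hdlR (G.head bb)
          omega

end Multigraph

namespace Multigraph

variable {G : Multigraph}

lemma reach {M R B : ℕ} (hB : B = (R+1)*(M+1)^R) (hconn : G.Connected)
    (hdeg : ∀ x : G.V, 2 ≤ G.deg x ∧ G.deg x ≤ M) (hnc : ¬ G.IsCycleGraph)
    (hdense : ∀ x : G.V, ∃ l, G.IsCycle l ∧ ∀ e ∈ l, G.dist x (G.tail e) ≤ R) :
    ∀ (k : ℕ) (a : G.E), R ≤ G.dl B (G.head a) + k →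
      ∃ W g, G.ReachSpec B a W g ∧ W.length ≤ (k+1) * (B+R+3) := by
  have hdlR : ∀ w : G.V, G.dl B w ≤ R := by
    rw [hB]; exact fun w => dl_le_R hconn (fun x => (hdeg x).2) hdense w
  intro k
  induction k with
  | zero =>
    intro a hk
    have hbody := reach_body hB hconn hdeg hnc hdense a 0 (fun b' hb' => by
      exfalso
      have h1 := hdlR (G.head b')
      omega)
    obtain ⟨W, g, hs, hlen⟩ := hbody
    refine ⟨W, g, hs, ?_⟩
    have h1 : (0+1) * (B+R+3) = B+R+3 := by ring
    omega
  | succ k ih =>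
    intro a hk
    have hbody := reach_body hB hconn hdeg hnc hdense a ((k+1)*(B+R+3))
      (fun b' hb' => ih b' (by omega))
    obtain ⟨W, g, hs, hlen⟩ := hbody
    refine ⟨W, g, hs, ?_⟩
    have hmul : (k+1+1) * (B+R+3) = (k+1)*(B+R+3) + (B+R+3) := by ring
    omega

lemma turn {M R B : ℕ} (hB : B = (R+1)*(M+1)^R) (hconn : G.Connected)
    (hdeg : ∀ x : G.V, 2 ≤ G.deg x ∧ G.deg x ≤ M) (hnc : ¬ G.IsCycleGraph)
    (hdense : ∀ x : G.V, ∃ l, G.IsCycle l ∧ ∀ e ∈ l, G.dist x (G.tail e) ≤ R)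
    (a : G.E) :
    ∃ W : List G.E, List.Chain' G.Step W ∧ W.head? = some a ∧
      W.getLast? = some (G.bar a) ∧ W.length ≤ 2*((R+1)*(B+R+3)) + B + 2 := by
  obtain ⟨W₁, g, ⟨hch₁, hh₁, hl₁, hUT⟩, hlen₁⟩ :=
    reach hB hconn hdeg hnc hdense R a (Nat.le_add_left R _)
  obtain ⟨W₂, hch₂, hh₂, hl₂, hlen₂⟩ := uturn hUT
  obtain ⟨hch₃, hh₃, hl₃, hlen₃⟩ := reverse_chain_spec hch₁ hh₁ hl₁
  obtain ⟨hcA, hhA, hlA, hlenA⟩ := splice hch₁ hch₂ hl₁ hh₂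
  obtain ⟨hcB, hhB, hlB, hlenB⟩ := splice hcA hch₃ (by rw [hlA]; exact hl₂) hh₃
  refine ⟨(W₁ ++ W₂.tail) ++ ((W₁.map G.bar).reverse).tail, hcB, ?_, ?_, ?_⟩
  · rw [hhB, hhA]; exact hh₁
  · rw [hlB]; exact hl₃
  · set X := (R+1) * (B+R+3) with hX
    omega

lemma q_nonneg (hdeg : ∀ x : G.V, 2 ≤ G.deg x) (e f : G.E) : 0 ≤ G.q e f := by
  unfold q
  split
  · apply div_nonneg zero_le_one
    have h2 : (2:ℝ) ≤ (G.deg (G.head e) : ℝ) := by exact_mod_cast hdeg (G.head e)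
    linarith
  · exact le_refl 0

lemma q_pos (hdeg : ∀ x : G.V, 2 ≤ G.deg x) {e f : G.E} (h : G.Step e f) :
    0 < G.q e f := by
  unfold q
  rw [if_pos h]
  have h2 : (2:ℝ) ≤ (G.deg (G.head e) : ℝ) := by exact_mod_cast hdeg (G.head e)
  apply div_pos one_pos
  linarith

lemma qn_nonneg (hdeg : ∀ x : G.V, 2 ≤ G.deg x) : ∀ (n : ℕ) (e f : G.E), 0 ≤ G.qn n e f := by
  intro n
  induction n with
  | zero =>
    intro e f
    simp only [qn]
    split <;> norm_num
  | succ n ih =>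
    intro e f
    simp only [qn]
    exact tsum_nonneg (fun g => mul_nonneg (ih e g) (q_nonneg hdeg g f))

lemma qn_support_finite (n : ℕ) (e : G.E) : {f | G.qn n e f ≠ 0}.Finite := by
  induction n with
  | zero =>
    apply Set.Finite.subset (Set.finite_singleton e)
    intro f hf
    simp only [Set.mem_setOf_eq, qn] at hf
    by_contra hne
    simp only [Set.mem_singleton_iff] at hne
    exact hf (if_neg (fun h => hne h.symm))
  | succ n ih =>
    apply Set.Finite.subset (ih.biUnion (fun g _ => G.locFin (G.head g)))
    intro f hf
    simp only [Set.mem_setOf_eq, qn] at hf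
    have hex : ∃ g, G.qn n e g * G.q g f ≠ 0 := by
      by_contra hall
      push_neg at hall
      exact hf (by rw [tsum_congr hall, tsum_zero])
    obtain ⟨g, hg⟩ := hex
    have h1 : G.qn n e g ≠ 0 := fun h => hg (by rw [h, zero_mul])
    have h2 : G.q g f ≠ 0 := fun h => hg (by rw [h, mul_zero])
    have hstep : G.Step g f := by
      by_contra hn
      apply h2
      unfold q
      rw [if_neg hn]
    exact Set.mem_biUnion h1 hstep.1

lemma qn_succ_pos (hdeg : ∀ x : G.V, 2 ≤ G.deg x) {n : ℕ} {e g f : G.E}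
    (hpos : 0 < G.qn n e g) (hstep : G.Step g f) : 0 < G.qn (n+1) e f := by
  classical
  have hsum : Summable (fun g' => G.qn n e g' * G.q g' f) := by
    apply summable_of_ne_finset_zero (s := (qn_support_finite n e).toFinset)
    intro b hb
    have hb0 : G.qn n e b = 0 := by
      by_contra h
      exact hb ((Set.Finite.mem_toFinset _).2 h)
    rw [hb0, zero_mul]
  simp only [qn]
  exact Summable.tsum_pos hsum (fun g' => mul_nonneg (qn_nonneg hdeg n e g') (q_nonneg hdeg g' f)) g
    (mul_pos hpos (q_pos hdeg hstep))

lemma qn_chain_pos (hdeg : ∀ x : G.V, 2 ≤ G.deg x) {e : G.E} :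
    ∀ (p : List G.E) (f : G.E), List.Chain' G.Step (e :: p) →
      (e :: p).getLast? = some f → 0 < G.qn p.length e f := by
  intro p
  induction p using List.reverseRecOn with
  | nil =>
    intro f _ hl
    simp only [List.getLast?_singleton, Option.some.injEq] at hl
    subst hl
    simp [qn]
  | append_singleton t x ih =>
    intro f hch hl
    have hch' : List.Chain' G.Step ((e :: t) ++ [x]) := hch
    obtain ⟨hch₁, _, hglue⟩ := List.isChain_append.1 hch'
    have hwex : (e::t).getLast? = some ((e::t).getLast (by simp)) :=
      List.getLast?_eq_getLast (by simp)
    have hstep : G.Step ((e::t).getLast (by simp)) x :=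
      hglue _ (by rw [hwex]; rfl) x rfl
    have hpos := ih ((e::t).getLast (by simp)) hch₁ hwex
    have hlx : f = x := by
      have h2 : ((e :: t) ++ [x]).getLast? = some x := List.getLast?_concat
      rw [List.cons_append] at h2
      exact Option.some.inj (hl.symm.trans h2)
    subst hlx
    have hlen : (t ++ [f]).length = t.length + 1 := by simp
    rw [hlen]
    exact qn_succ_pos hdeg hpos hstep

end Multigraph


/-- If `2 ≤ deg ≤ M`, the graph is connected, not a cycle, and every
ball of radius `R` contains a cycle, then there is `L = L(M,R)` such that every
oriented edge reaches its reversal by a non-backtracking path of length `≤ L`. -/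
theorem nbrw_uniform_reversal (M R : ℕ) :
    ∃ L : ℕ, ∀ G : Multigraph,
      G.Connected → (∀ x, 2 ≤ G.deg x ∧ G.deg x ≤ M) → ¬ G.IsCycleGraph →
      (∀ x : G.V, ∃ l : List G.E, G.IsCycle l ∧ ∀ e ∈ l, G.dist x (G.tail e) ≤ R) →
      ∀ e : G.E, ∃ n : ℕ, 1 ≤ n ∧ n ≤ L ∧ 0 < G.qn n e (G.bar e) := by
  refine ⟨2*((R+1)*((R+1)*(M+1)^R+R+3)) + (R+1)*(M+1)^R + 2, ?_⟩
  intro G hconn hdeg hnc hdense e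
  obtain ⟨W, hch, hh, hl, hlen⟩ :=
    Multigraph.turn (B := (R+1)*(M+1)^R) rfl hconn hdeg hnc hdense e
  obtain ⟨p, rfl⟩ : ∃ p, W = e :: p := by
    cases W with
    | nil => simp at hh
    | cons x t =>
      simp only [List.head?_cons, Option.some.injEq] at hh
      exact ⟨t, by rw [hh]⟩
  have hppos : p ≠ [] := by
    intro h
    subst h
    simp only [List.getLast?_singleton, Option.some.injEq] at hl
    exact G.bar_ne e hl.symm
  refine ⟨p.length, ?_, ?_, ?_⟩
  · have := List.length_pos_iff.2 hppos
    omega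
  · have hW : (e :: p).length = p.length + 1 := rfl
    set Y := 2*((R+1)*((R+1)*(M+1)^R+R+3)) + (R+1)*(M+1)^R + 2 with hY
    omega
  · exact Multigraph.qn_chain_pos (fun x => (hdeg x).1) p (G.bar e) hch hl
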